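/- For all K ≥ 1, C ≥ 0 and δ ≥ 0 there exists B ≥ 0 with the following property: if X is a δ-hyperbolic geodesic metric space and γ, γ' : ℝ → X are (K,C)-quasi-geodesics which are forward asymptotic (for every M there is T such that (γ(s), γ'(t))_{γ(0)} ≥ M whenever s, t ≥ T) and backward asymptotic (for every M there is T such that (γ(−s), γ'(−t))_{γ(0)} ≥ M whenever s, t ≥ T), then every point of the image of γ lies within distance B of the image of γ'. -/

import Mathlib

open Metric Set

noncomputable section MorseAux

variable {X : Type*} [MetricSpace X]

def gp (x y w : X) : ℝ := (dist x w + dist y w - dist x y) / 2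

lemma gp_nonneg (x y w : X) : 0 ≤ gp x y w := by
  have h := dist_triangle x w y
  rw [dist_comm w y] at h
  unfold gp; linarith

lemma gp_comm (x y w : X) : gp x y w = gp y x w := by
  unfold gp; rw [dist_comm x y]; ring

lemma gp_self_left (x y : X) : gp x y x = 0 := by
  unfold gp; rw [dist_self, dist_comm y x]; ring

lemma gp_le_left (x y w : X) : gp x y w ≤ dist x w := by
  have h := dist_triangle y x w
  rw [dist_comm y x] at h
  unfold gp; linarith

lemma gp_base_move (x y w w' : X) : gp x y w ≤ gp x y w' + dist w w' := by
  have h1 := dist_triangle x w' w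
  have h2 := dist_triangle y w' w
  rw [dist_comm w' w] at h1 h2
  unfold gp; linarith

lemma gp_between {x y q : X} (h : dist x q + dist q y = dist x y) : gp x y q = 0 := by
  unfold gp; rw [dist_comm y q]; linarith

lemma dist_le_gp (a b p q : X) : dist p q ≤ gp a p q + gp b p q + gp a b p := by
  have h := gp_nonneg a b q
  unfold gp at *
  linarith

lemma gp_chain {δ : ℝ} (hδ : 0 ≤ δ)
    (hyp : ∀ x y z w : X, min (gp x z w) (gp y z w) - δ ≤ gp x y w) :
    ∀ (n : ℕ) (x : ℕ → X) (w : X) (m : ℝ) (p q : ℕ), p < q → q ≤ p + 2 ^ n →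
      (∀ i, p ≤ i → i < q → m ≤ gp (x i) (x (i + 1)) w) →
      m - n * δ ≤ gp (x p) (x q) w := by
  intro n
  induction n with
  | zero =>
    intro x w m p q h1 h2 h3
    have hq : q = p + 1 := by omega
    subst hq
    simpa using h3 p le_rfl (by omega)
  | succ n ih =>
    intro x w m p q h1 h2 h3
    by_cases hq : q ≤ p + 2 ^ n
    · have h := ih x w m p q h1 hq h3
      have : (n : ℝ) * δ ≤ (n + 1 : ℕ) * δ := by
        push_cast
        nlinarith
      linarith
    · push_neg at hq
      have h2n : 0 < 2 ^ n := Nat.two_pow_pos n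
      have hpow : 2 ^ (n + 1) = 2 ^ n + 2 ^ n := by rw [pow_succ]; ring
      set r := p + 2 ^ n with hr
      have h4 : m - n * δ ≤ gp (x p) (x r) w :=
        ih x w m p r (by omega) le_rfl (fun i h5 h6 => h3 i h5 (by omega))
      have h5 : m - n * δ ≤ gp (x r) (x q) w := by
        refine ih x w m r q (by omega) (by omega) (fun i h5 h6 => h3 i (by omega) h6)
      have h6 := hyp (x p) (x q) (x r) w
      rw [gp_comm (x q) (x r) w] at h6
      have h7 : min (gp (x p) (x r) w) (gp (x r) (x q) w) ≥ m - n * δ :=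
        le_min h4 h5
      push_cast
      linarith [min_le_left (gp (x p) (x r) w) (gp (x r) (x q) w)]

lemma min_lip (z z' M : ℝ) : |min z M - min z' M| ≤ |z - z'| := by
  rcases min_cases z M with ⟨h1, h2⟩ | ⟨h1, h2⟩ <;>
    rcases min_cases z' M with ⟨h3, h4⟩ | ⟨h3, h4⟩ <;> rw [h1, h3, abs_le] <;>
    rcases abs_cases (z - z') with ⟨h5, h6⟩ | ⟨h5, h6⟩ <;> constructor <;> linarith

/-- The distance bound for Morse part 1. -/
def Dzero (K C δ : ℝ) : ℝ :=
  (9 * δ * Real.sqrt K + Real.sqrt (3 + K + C + δ + 12 * δ * Real.sqrt (K * (1 + C)))) ^ 2 + 1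

lemma Dzero_ge_one (K C δ : ℝ) : 1 ≤ Dzero K C δ := by
  unfold Dzero
  nlinarith [sq_nonneg (9 * δ * Real.sqrt K +
    Real.sqrt (3 + K + C + δ + 12 * δ * Real.sqrt (K * (1 + C))))]

lemma qg_param {K C : ℝ} (hK : 1 ≤ K) {γ : ℝ → X}
    (hγ : ∀ s t : ℝ, |s - t| / K - C ≤ dist (γ s) (γ t) ∧ dist (γ s) (γ t) ≤ K * |s - t| + C)
    (s t : ℝ) : |s - t| ≤ K * (dist (γ s) (γ t) + C) := by
  have h := (hγ s t).1
  have hK0 : 0 < K := by linarith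
  rw [div_sub' (ne_of_gt hK0), div_le_iff₀ hK0] at h
  · nlinarith [dist_nonneg (x := γ s) (y := γ t)]


lemma count_arith {K C D n1r n2r : ℝ} (hK : 1 ≤ K) (hC : 0 ≤ C) (hD0 : 0 ≤ D)
    (h1 : n1r ≤ D + 4) (h2 : n2r ≤ K * (6 * D + 4 + C) + 2) :
    n1r + n2r + n1r ≤ 8 * K * D + 16 * K * (1 + C) := by
  nlinarith [mul_nonneg (sub_nonneg.2 hK) hD0, mul_nonneg hC (by linarith : (0:ℝ) ≤ K),
    mul_nonneg (sub_nonneg.2 hK) hC]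

lemma quad_bound {D P Q : ℝ} (hD0 : 0 ≤ D) (hP0 : 0 ≤ P) (hQ0 : 0 ≤ Q)
    (hDPQ : D ≤ P + Q * Real.sqrt D) : D ≤ (Q + Real.sqrt P)^2 := by
  have hE : Real.sqrt D ^ 2 = D := Real.sq_sqrt hD0
  have hE0 : (0:ℝ) ≤ Real.sqrt D := Real.sqrt_nonneg D
  have hPs : Real.sqrt P ^ 2 = P := Real.sq_sqrt hP0
  have hPs0 : (0:ℝ) ≤ Real.sqrt P := Real.sqrt_nonneg P
  have hEb : Real.sqrt D ≤ Q + Real.sqrt P := by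
    by_contra hcon
    push_neg at hcon
    have h3 : 0 < Real.sqrt D - (Q + Real.sqrt P) := sub_pos.2 hcon
    have hE' : 0 < Real.sqrt D := lt_of_le_of_lt (by positivity) hcon
    nlinarith [mul_pos hE' h3, mul_nonneg hPs0 h3.le]
  calc D = Real.sqrt D ^ 2 := hE.symm
  _ ≤ (Q + Real.sqrt P)^2 := pow_le_pow_left₀ hE0 hEb 2

lemma analytic_endgame {K C δ D : ℝ} (hK : 1 ≤ K) (hC : 0 ≤ C) (hδ : 0 ≤ δ) (hD0 : 0 ≤ D)
    (N n : ℕ) (hN0 : 0 < N) (hn : n = Nat.log 2 N + 1)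
    (hNR : (N : ℝ) ≤ 8 * K * D + 16 * K * (1 + C))
    (hchain : D - 2 - (K + C)/2 - n * δ ≤ 0) :
    D + 1 ≤ Dzero K C δ := by
  have hNpos : (0:ℝ) < (N:ℝ) := by exact_mod_cast hN0
  have hlogN : (Nat.log 2 N : ℝ) ≤ 3 * Real.sqrt N := by
    have h1 : (2:ℝ) ^ (Nat.log 2 N) ≤ (N : ℝ) := by
      exact_mod_cast Nat.pow_log_le_self 2 (by omega)
    have h2 : (Nat.log 2 N : ℝ) * Real.log 2 ≤ Real.log N := by
      rw [← Real.log_pow]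
      exact Real.log_le_log (by positivity) h1
    have h3 : (0:ℝ) < Real.sqrt N := Real.sqrt_pos.2 hNpos
    have h4 : Real.log (Real.sqrt N) ≤ Real.sqrt N - 1 := Real.log_le_sub_one_of_pos h3
    have h5 : Real.log (N:ℝ) = 2 * Real.log (Real.sqrt N) := by
      rw [Real.log_sqrt hNpos.le]; ring
    have h6 : (0.6931471803 : ℝ) < Real.log 2 := Real.log_two_gt_d9
    have h7 : (0:ℝ) ≤ (Nat.log 2 N : ℝ) := Nat.cast_nonneg _
    nlinarith [Real.sqrt_nonneg (N:ℝ)]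
  have hsqrt9 : Real.sqrt 9 = 3 := by
    rw [show (9:ℝ) = 3^2 by norm_num, Real.sqrt_sq (by norm_num : (0:ℝ) ≤ 3)]
  have hsqrt16 : Real.sqrt 16 = 4 := by
    rw [show (16:ℝ) = 4^2 by norm_num, Real.sqrt_sq (by norm_num : (0:ℝ) ≤ 4)]
  have hsplit : Real.sqrt ((N:ℝ)) ≤ 3 * Real.sqrt K * Real.sqrt D + 4 * Real.sqrt (K * (1 + C)) := by
    have ha : (0:ℝ) ≤ 8*K*D := by positivity
    have hb : (0:ℝ) ≤ 16*K*(1+C) := by positivity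
    have h1 : Real.sqrt (N:ℝ) ≤ Real.sqrt (8*K*D + 16*K*(1+C)) := Real.sqrt_le_sqrt hNR
    have h2 : Real.sqrt (8*K*D + 16*K*(1+C)) ≤ Real.sqrt (8*K*D) + Real.sqrt (16*K*(1+C)) := by
      have h3 : 8*K*D + 16*K*(1+C) ≤ (Real.sqrt (8*K*D) + Real.sqrt (16*K*(1+C)))^2 := by
        have e1 := Real.sq_sqrt ha
        have e2 := Real.sq_sqrt hb
        nlinarith [Real.sqrt_nonneg (8*K*D), Real.sqrt_nonneg (16*K*(1+C))]
      calc Real.sqrt (8*K*D + 16*K*(1+C))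
          ≤ Real.sqrt ((Real.sqrt (8*K*D) + Real.sqrt (16*K*(1+C)))^2) := Real.sqrt_le_sqrt h3
        _ = _ := Real.sqrt_sq (by positivity)
    have h4 : Real.sqrt (8*K*D) ≤ 3 * Real.sqrt K * Real.sqrt D := by
      rw [show (8*K*D : ℝ) = 8*(K*D) by ring, Real.sqrt_mul (by norm_num : (0:ℝ) ≤ 8) (K*D),
        Real.sqrt_mul (by linarith : (0:ℝ) ≤ K) D]
      have h5 : Real.sqrt 8 ≤ 3 := by
        have h6 := Real.sqrt_le_sqrt (show (8:ℝ) ≤ 9 by norm_num)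
        rw [hsqrt9] at h6
        exact h6
      nlinarith [Real.sqrt_nonneg K, Real.sqrt_nonneg D, Real.sqrt_nonneg (8:ℝ),
        mul_nonneg (Real.sqrt_nonneg K) (Real.sqrt_nonneg D)]
    have h6 : Real.sqrt (16*K*(1+C)) = 4 * Real.sqrt (K*(1+C)) := by
      rw [show (16*K*(1+C) : ℝ) = 16*(K*(1+C)) by ring,
        Real.sqrt_mul (by norm_num : (0:ℝ) ≤ 16) _, hsqrt16]
    linarith
  have hn_real : (n:ℝ) = (Nat.log 2 N : ℝ) + 1 := by rw [hn]; push_cast; ring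
  have hfinal : D ≤ 2 + (K + C)/2 + δ + 3*δ*Real.sqrt N := by
    have h2 : (Nat.log 2 N : ℝ) * δ ≤ 3*Real.sqrt N * δ := mul_le_mul_of_nonneg_right hlogN hδ
    have h3 : (n:ℝ) * δ = (Nat.log 2 N : ℝ) * δ + δ := by rw [hn_real]; ring
    nlinarith [hchain]
  have hDPQ : D ≤ (3 + K + C + δ + 12*δ*Real.sqrt (K*(1+C))) +
      (9*δ*Real.sqrt K) * Real.sqrt D := by
    have h1 : 3*δ*Real.sqrt N ≤ 3*δ*(3*Real.sqrt K*Real.sqrt D + 4*Real.sqrt (K*(1+C))) :=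
      mul_le_mul_of_nonneg_left hsplit (by positivity)
    nlinarith [hfinal]
  have hDb := quad_bound hD0 (show (0:ℝ) ≤ 3 + K + C + δ + 12*δ*Real.sqrt (K*(1+C)) by positivity)
    (show (0:ℝ) ≤ 9*δ*Real.sqrt K by positivity) hDPQ
  rw [Dzero]
  linarith

set_option maxHeartbeats 1000000 in
lemma morse_M1 {K C δ : ℝ} (hK : 1 ≤ K) (hC : 0 ≤ C) (hδ : 0 ≤ δ)
    (geo : ∀ x y : X, ∃ σ : ℝ → X, σ 0 = x ∧ σ (dist x y) = y ∧
      ∀ s ∈ Set.Icc (0:ℝ) (dist x y), ∀ t ∈ Set.Icc (0:ℝ) (dist x y),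
        dist (σ s) (σ t) = |s - t|)
    (hyp : ∀ x y z w : X, min (gp x z w) (gp y z w) - δ ≤ gp x y w)
    (γ : ℝ → X)
    (hγ : ∀ s t : ℝ, |s - t| / K - C ≤ dist (γ s) (γ t) ∧ dist (γ s) (γ t) ≤ K * |s - t| + C)
    (a b : ℝ) (hab : a ≤ b)
    (σ : ℝ → X) (hσ0 : σ 0 = γ a) (hσL : σ (dist (γ a) (γ b)) = γ b)
    (hσ : ∀ s ∈ Set.Icc (0:ℝ) (dist (γ a) (γ b)), ∀ t ∈ Set.Icc (0:ℝ) (dist (γ a) (γ b)),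
      dist (σ s) (σ t) = |s - t|) :
    ∀ t ∈ Set.Icc (0:ℝ) (dist (γ a) (γ b)),
      Metric.infDist (σ t) (γ '' Set.Icc a b) ≤ Dzero K C δ := by
  have hK0 : (0:ℝ) < K := by linarith
  set L := dist (γ a) (γ b) with hL
  have hL0 : 0 ≤ L := dist_nonneg
  set QG := γ '' Set.Icc a b with hQGdef
  have hmemQG : ∀ r, a ≤ r → r ≤ b → γ r ∈ QG := fun r h1 h2 => ⟨r, ⟨h1, h2⟩, rfl⟩
  have hQGne : QG.Nonempty := ⟨γ a, hmemQG a le_rfl hab⟩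
  -- the sup of the distance function
  have hbdd : BddAbove ((fun t => Metric.infDist (σ t) QG) '' Set.Icc 0 L) := by
    refine ⟨L, ?_⟩
    rintro y ⟨t, ht, rfl⟩
    have h1 : Metric.infDist (σ t) QG ≤ dist (σ t) (γ a) :=
      Metric.infDist_le_dist_of_mem (hmemQG a le_rfl hab)
    have h2 : dist (σ t) (σ 0) = |t - 0| := hσ t ht 0 ⟨le_rfl, hL0⟩
    rw [hσ0] at h2
    rw [h2] at h1
    simp only []
    calc Metric.infDist (σ t) QG ≤ |t - 0| := h1
    _ ≤ L := by rw [sub_zero, abs_of_nonneg ht.1]; exact ht.2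
  have hne : ((fun t => Metric.infDist (σ t) QG) '' Set.Icc 0 L).Nonempty :=
    ⟨_, Set.mem_image_of_mem _ (⟨le_rfl, hL0⟩ : (0:ℝ) ∈ Set.Icc 0 L)⟩
  set S := sSup ((fun t => Metric.infDist (σ t) QG) '' Set.Icc 0 L) with hS
  have hfS : ∀ t ∈ Set.Icc (0:ℝ) L, Metric.infDist (σ t) QG ≤ S := fun t ht =>
    le_csSup hbdd (Set.mem_image_of_mem _ ht)
  obtain ⟨y, hy, hSy⟩ := exists_lt_of_lt_csSup hne (show S - 1 < S by linarith)
  obtain ⟨tu, htu, hyeq⟩ := hy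
  set D := Metric.infDist (σ tu) QG with hD
  rw [← hyeq] at hSy  -- S - 1 < D  (hSy : S - 1 < (fun t => ...) tu)
  have hD0 : 0 ≤ D := Metric.infDist_nonneg
  have hSD : S ≤ D + 1 := by have h' : S - 1 < D := hSy; linarith
  have hfD : ∀ t ∈ Set.Icc (0:ℝ) L, Metric.infDist (σ t) QG ≤ D + 1 := fun t ht =>
    (hfS t ht).trans hSD
  have hDdist : ∀ r, a ≤ r → r ≤ b → D ≤ dist (σ tu) (γ r) := fun r h1 h2 =>
    Metric.infDist_le_dist_of_mem (hmemQG r h1 h2)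
  set u := σ tu with hu
  set tm := max 0 (tu - 2 * D) with htmdef
  set tp := min L (tu + 2 * D) with htpdef
  have htm : tm ∈ Set.Icc (0:ℝ) L := ⟨le_max_left _ _, max_le hL0 (by linarith [htu.2])⟩
  have htp : tp ∈ Set.Icc (0:ℝ) L := ⟨le_min hL0 (by linarith [htu.1]), min_le_left _ _⟩
  have htmtu : tm ≤ tu := max_le htu.1 (by linarith)
  have htutp : tu ≤ tp := le_min htu.2 (by linarith)
  set um := σ tm with hum
  set up := σ tp with hup
  have hdum : dist um u = tu - tm := by
    rw [hσ tm htm tu htu, abs_of_nonpos (by linarith)]; ring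
  have hdup : dist u up = tp - tu := by
    rw [hσ tu htu tp htp, abs_of_nonpos (by linarith)]; ring
  have hdmp : dist um up = tp - tm := by
    rw [hσ tm htm tp htp, abs_of_nonpos (by linarith)]; ring
  have hgpmu : gp um up u = 0 := gp_between (by rw [hdum, hdup, hdmp]; ring)
  have htm2D : tu - tm ≤ 2 * D := by
    have := le_max_right (0:ℝ) (tu - 2 * D); linarith
  have htp2D : tp - tu ≤ 2 * D := by
    have := min_le_right L (tu + 2 * D); linarith
  -- left witness
  have hwm : ∃ sm, a ≤ sm ∧ sm ≤ b ∧ dist um (γ sm) < D + 2 ∧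
      D - 2 ≤ (tu - tm) - dist um (γ sm) := by
    by_cases hcase : tu - 2 * D < 0
    · have htm0 : tm = 0 := max_eq_left (by linarith)
      have hum0 : um = γ a := by rw [hum, htm0, hσ0]
      refine ⟨a, le_rfl, hab, ?_, ?_⟩
      · rw [hum0, dist_self]; linarith
      · rw [hum0, dist_self, htm0]
        have h1 : D ≤ dist u (γ a) := hDdist a le_rfl hab
        have h2 : dist u (γ a) = tu := by
          rw [hu, ← hσ0, hσ tu htu 0 ⟨le_rfl, hL0⟩, sub_zero, abs_of_nonneg htu.1]
        linarith
    · push_neg at hcase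
      have htm0 : tm = tu - 2 * D := max_eq_right hcase
      have h1 : Metric.infDist um QG < D + 2 := (hfD tm htm).trans_lt (by linarith)
      obtain ⟨z, hz, hlt⟩ := (Metric.infDist_lt_iff hQGne).1 h1
      obtain ⟨r, hr, rfl⟩ := hz
      exact ⟨r, hr.1, hr.2, hlt, by rw [htm0]; linarith⟩
  obtain ⟨sm, hsma, hsmb, hsmd, hsmfar⟩ := hwm
  -- right witness
  have hwp : ∃ sp, a ≤ sp ∧ sp ≤ b ∧ dist up (γ sp) < D + 2 ∧
      D - 2 ≤ (tp - tu) - dist up (γ sp) := by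
    by_cases hcase : L < tu + 2 * D
    · have htp0 : tp = L := min_eq_left (by linarith)
      have hup0 : up = γ b := by rw [hup, htp0, hσL]
      refine ⟨b, hab, le_rfl, ?_, ?_⟩
      · rw [hup0, dist_self]; linarith
      · rw [hup0, dist_self, htp0]
        have h1 : D ≤ dist u (γ b) := hDdist b hab le_rfl
        have h2 : dist u (γ b) = L - tu := by
          rw [hu, ← hσL, hσ tu htu L ⟨hL0, le_rfl⟩, abs_of_nonpos (by linarith [htu.2])]; ring
        linarith
    · push_neg at hcase
      have htp0 : tp = tu + 2 * D := min_eq_right hcase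
      have h1 : Metric.infDist up QG < D + 2 := (hfD tp htp).trans_lt (by linarith)
      obtain ⟨z, hz, hlt⟩ := (Metric.infDist_lt_iff hQGne).1 h1
      obtain ⟨r, hr, rfl⟩ := hz
      exact ⟨r, hr.1, hr.2, hlt, by rw [htp0]; linarith⟩
  obtain ⟨sp, hspa, hspb, hspd, hspfar⟩ := hwp
  -- geodesic connectors
  obtain ⟨σ1, hσ10, hσ1d, hσ1iso⟩ := geo um (γ sm)
  obtain ⟨σ2, hσ20, hσ2d, hσ2iso⟩ := geo (γ sp) up
  set d1 := dist um (γ sm) with hd1def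
  set d2 := dist (γ sp) up with hd2def
  have hd10 : 0 ≤ d1 := dist_nonneg
  have hd20 : 0 ≤ d2 := dist_nonneg
  have hd1D : d1 < D + 2 := hsmd
  have hd2D : d2 < D + 2 := by rw [hd2def, dist_comm]; exact hspd
  have hσ1far : ∀ z, 0 ≤ z → z ≤ d1 → D - 2 ≤ dist u (σ1 z) := by
    intro z h0 hz
    have h1 : dist um (σ1 z) = z := by
      rw [← hσ10, hσ1iso 0 ⟨le_rfl, hd10⟩ z ⟨h0, hz⟩, abs_of_nonpos (by linarith), neg_sub,
        sub_zero]
    have h3 := dist_triangle u (σ1 z) um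
    rw [dist_comm (σ1 z) um] at h3
    have h4 : dist u um = tu - tm := by rw [dist_comm]; exact hdum
    linarith [hsmfar]
  have hσ2far : ∀ z, 0 ≤ z → z ≤ d2 → D - 2 ≤ dist u (σ2 z) := by
    intro z h0 hz
    have h1 : dist up (σ2 z) = d2 - z := by
      rw [← hσ2d, hσ2iso d2 ⟨hd20, le_rfl⟩ z ⟨h0, hz⟩, abs_of_nonneg (by linarith)]
    have h3 := dist_triangle u (σ2 z) up
    rw [dist_comm (σ2 z) up] at h3
    have h4 : dist u up = tp - tu := hdup
    have h5 : dist up (γ sp) = d2 := by rw [hd2def, dist_comm]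
    rw [h5] at hspfar
    linarith [hspfar]
  -- middle parametrization
  set Mab := |sp - sm| with hMabdef
  have hMab0 : 0 ≤ Mab := abs_nonneg _
  have hMabK : Mab ≤ K * (6 * D + 4 + C) := by
    have h1 := qg_param hK hγ sp sm
    have h2 : dist (γ sp) (γ sm) ≤ 6 * D + 4 := by
      have t1 := dist_triangle (γ sp) up (γ sm)
      have t2 := dist_triangle up u (γ sm)
      have t3 := dist_triangle u um (γ sm)
      have e1 : dist (γ sp) up = d2 := rfl
      have e2 : dist up u = tp - tu := by rw [dist_comm]; exact hdup
      have e3 : dist u um = tu - tm := by rw [dist_comm]; exact hdum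
      linarith
    have h3 : K * (dist (γ sp) (γ sm) + C) ≤ K * (6 * D + 4 + C) :=
      mul_le_mul_of_nonneg_left (by linarith) (by linarith)
    linarith
  set e : ℝ := if sm ≤ sp then 1 else -1 with hedef
  have he1 : |e| = 1 := by by_cases h : sm ≤ sp <;> simp [hedef, h]
  set par : ℝ → ℝ := fun z => sm + min z Mab * e with hpardef
  have hpar_mem : ∀ z, 0 ≤ z → a ≤ par z ∧ par z ≤ b := by
    intro z h0
    have hm1 : 0 ≤ min z Mab := le_min h0 hMab0
    have hm2 : min z Mab ≤ Mab := min_le_right _ _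
    by_cases h : sm ≤ sp
    · have he : e = 1 := if_pos h
      have hM : Mab = sp - sm := by rw [hMabdef, abs_of_nonneg (by linarith)]
      simp only [hpardef, he, mul_one]
      constructor <;> nlinarith
    · push_neg at h
      have he : e = -1 := if_neg (not_le.2 h)
      have hM : Mab = sm - sp := by rw [hMabdef, abs_of_nonpos (by linarith)]; ring
      simp only [hpardef, he, mul_neg, mul_one]
      constructor <;> nlinarith
  have hpar0 : par 0 = sm := by
    simp only [hpardef, min_eq_left hMab0, zero_mul, add_zero]
  have hparM : ∀ z, Mab ≤ z → par z = sp := by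
    intro z hz
    have hm : min z Mab = Mab := min_eq_right hz
    by_cases h : sm ≤ sp
    · have he : e = 1 := if_pos h
      have hM : Mab = sp - sm := by rw [hMabdef, abs_of_nonneg (by linarith)]
      simp only [hpardef]; rw [hm, he, hM]; ring
    · push_neg at h
      have he : e = -1 := if_neg (not_le.2 h)
      have hM : Mab = sm - sp := by rw [hMabdef, abs_of_nonpos (by linarith)]; ring
      simp only [hpardef]; rw [hm, he, hM]; ring
  have hpar_far : ∀ z, 0 ≤ z → D ≤ dist u (γ (par z)) := fun z h0 =>
    hDdist _ (hpar_mem z h0).1 (hpar_mem z h0).2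
  have hpar_step : ∀ z z' : ℝ, dist (γ (par z)) (γ (par z')) ≤ K * |z - z'| + C := by
    intro z z'
    have h1 := (hγ (par z) (par z')).2
    have h2 : |par z - par z'| ≤ |z - z'| := by
      simp only [hpardef]
      have h3 : sm + min z Mab * e - (sm + min z' Mab * e) = (min z Mab - min z' Mab) * e := by
        ring
      rw [h3, abs_mul, he1, mul_one]
      exact min_lip z z' Mab
    have h4 : K * |par z - par z'| ≤ K * |z - z'| :=
      mul_le_mul_of_nonneg_left h2 (by linarith)
    linarith
  -- counts
  set n1 : ℕ := ⌈D⌉₊ + 3 with hn1def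
  set n2 : ℕ := ⌈K * (6 * D + 4 + C)⌉₊ + 1 with hn2def
  have hn1d1 : d1 ≤ (n1 : ℝ) := by
    have h := Nat.le_ceil D
    have : ((n1 : ℕ) : ℝ) = (⌈D⌉₊ : ℝ) + 3 := by rw [hn1def]; push_cast; ring
    rw [this]; linarith
  have hn2M : Mab ≤ (n2 : ℝ) := by
    have h := Nat.le_ceil (K * (6 * D + 4 + C))
    have : ((n2 : ℕ) : ℝ) = (⌈K * (6 * D + 4 + C)⌉₊ : ℝ) + 1 := by rw [hn2def]; push_cast; ring
    rw [this]; linarith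
  have hn3d2 : d2 ≤ (n1 : ℝ) := by
    have h := Nat.le_ceil D
    have : ((n1 : ℕ) : ℝ) = (⌈D⌉₊ : ℝ) + 3 := by rw [hn1def]; push_cast; ring
    rw [this]; linarith
  set N := n1 + n2 + n1 with hNdef
  -- the chain
  set x : ℕ → X := fun j =>
    if j ≤ n1 then σ1 (min (j : ℝ) d1)
    else if j ≤ n1 + n2 then γ (par ((j - n1 : ℕ) : ℝ))
    else σ2 (min ((j - (n1 + n2) : ℕ) : ℝ) d2) with hxdef
  have hx1 : ∀ j : ℕ, j ≤ n1 → x j = σ1 (min (j : ℝ) d1) := fun j hj => by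
    simp only [hxdef, if_pos hj]
  have hx2 : ∀ j : ℕ, n1 ≤ j → j ≤ n1 + n2 → x j = γ (par ((j - n1 : ℕ) : ℝ)) := by
    intro j h1 h2
    rcases eq_or_lt_of_le h1 with h | h
    · rw [hx1 j h.symm.le]
      have hc1 : (j : ℝ) = (n1 : ℝ) := by rw [h]
      have hc2 : (j - n1 : ℕ) = 0 := by omega
      rw [hc1, min_eq_right hn1d1, hσ1d, hc2, Nat.cast_zero, hpar0]
    · have hnot : ¬ (j ≤ n1) := by omega
      simp only [hxdef, if_neg hnot, if_pos h2]
  have hx3 : ∀ j : ℕ, n1 + n2 ≤ j → x j = σ2 (min ((j - (n1 + n2) : ℕ) : ℝ) d2) := by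
    intro j h1
    rcases eq_or_lt_of_le h1 with h | h
    · rw [hx2 j (by omega) h.symm.le]
      have hc1 : (j - n1 : ℕ) = n2 := by omega
      have hc2 : (j - (n1 + n2) : ℕ) = 0 := by omega
      rw [hc1, hparM _ hn2M, hc2, Nat.cast_zero, min_eq_left hd20, hσ20]
    · have hnot1 : ¬ (j ≤ n1) := by omega
      have hnot2 : ¬ (j ≤ n1 + n2) := by omega
      simp only [hxdef, if_neg hnot1, if_neg hnot2]
  -- distance lower bound along the chain
  have hL1 : ∀ j : ℕ, D - 2 ≤ dist u (x j) := by
    intro j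
    rcases le_or_gt j n1 with h | h
    · rw [hx1 j h]
      exact hσ1far _ (le_min (Nat.cast_nonneg j) hd10) (min_le_right _ _)
    rcases le_or_gt j (n1 + n2) with h2 | h2
    · rw [hx2 j h.le h2]
      have h3 := hpar_far ((j - n1 : ℕ) : ℝ) (Nat.cast_nonneg _)
      linarith
    · rw [hx3 j h2.le]
      exact hσ2far _ (le_min (Nat.cast_nonneg _) hd20) (min_le_right _ _)
  -- step bound along the chain
  have hL2 : ∀ j : ℕ, dist (x j) (x (j + 1)) ≤ K + C := by
    intro j
    rcases le_or_gt (j + 1) n1 with h | h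
    · rw [hx1 j (by omega), hx1 (j + 1) h]
      have hm1 : min ((j:ℕ):ℝ) d1 ∈ Set.Icc 0 d1 :=
        ⟨le_min (Nat.cast_nonneg _) hd10, min_le_right _ _⟩
      have hm2 : min (((j+1:ℕ)):ℝ) d1 ∈ Set.Icc 0 d1 :=
        ⟨le_min (Nat.cast_nonneg _) hd10, min_le_right _ _⟩
      rw [hσ1iso _ hm1 _ hm2]
      have h3 := min_lip ((j:ℕ):ℝ) (((j+1:ℕ)):ℝ) d1
      have h4 : |((j:ℕ):ℝ) - (((j+1:ℕ)):ℝ)| = 1 := by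
        push_cast
        rw [show ((j:ℝ) - ((j:ℝ)+1)) = -1 by ring, abs_neg, abs_one]
      rw [h4] at h3
      linarith
    rcases le_or_gt (j + 1) (n1 + n2) with h2 | h2
    · rw [hx2 j (by omega) (by omega), hx2 (j + 1) (by omega) h2]
      have hc : ((j + 1 - n1 : ℕ) : ℝ) = ((j - n1 : ℕ) : ℝ) + 1 := by
        have hcc : j + 1 - n1 = (j - n1) + 1 := by omega
        rw [hcc]; push_cast; ring
      rw [hc]
      have h3 := hpar_step ((j - n1 : ℕ) : ℝ) (((j - n1 : ℕ) : ℝ) + 1)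
      have h5 : ((j - n1:ℕ):ℝ) - (((j - n1:ℕ):ℝ) + 1) = -1 := by ring
      rw [h5, abs_neg, abs_one, mul_one] at h3
      exact h3
    · rw [hx3 j (by omega), hx3 (j + 1) (by omega)]
      have hc : ((j + 1 - (n1+n2) : ℕ) : ℝ) = ((j - (n1+n2) : ℕ) : ℝ) + 1 := by
        have hcc : j + 1 - (n1+n2) = (j - (n1+n2)) + 1 := by omega
        rw [hcc]; push_cast; ring
      rw [hc]
      have hm1 : min (((j - (n1+n2):ℕ)):ℝ) d2 ∈ Set.Icc 0 d2 :=
        ⟨le_min (Nat.cast_nonneg _) hd20, min_le_right _ _⟩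
      have hm2 : min ((((j - (n1+n2):ℕ)):ℝ) + 1) d2 ∈ Set.Icc 0 d2 :=
        ⟨le_min (by positivity) hd20, min_le_right _ _⟩
      rw [hσ2iso _ hm1 _ hm2]
      have h3 := min_lip (((j - (n1+n2):ℕ)):ℝ) ((((j - (n1+n2):ℕ)):ℝ) + 1) d2
      have h4 : |(((j - (n1+n2):ℕ)):ℝ) - ((((j - (n1+n2):ℕ)):ℝ) + 1)| = 1 := by
        rw [show ((((j - (n1+n2):ℕ)):ℝ) - ((((j - (n1+n2):ℕ)):ℝ) + 1)) = -1 by ring, abs_neg,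
          abs_one]
      rw [h4] at h3
      linarith
  have hx0 : x 0 = um := by
    rw [hx1 0 (by omega), Nat.cast_zero, min_eq_left hd10, hσ10]
  have hxN : x N = up := by
    rw [hx3 N (by omega)]
    have hc : (N - (n1 + n2) : ℕ) = n1 := by omega
    rw [hc, min_eq_right hn3d2, hσ2d]
  -- apply the chaining lemma
  have hcons : ∀ i : ℕ, 0 ≤ i → i < N → D - 2 - (K + C)/2 ≤ gp (x i) (x (i+1)) u := by
    intro i _ _
    have h1 : D - 2 ≤ dist (x i) u := by rw [dist_comm]; exact hL1 i
    have h2 : D - 2 ≤ dist (x (i+1)) u := by rw [dist_comm]; exact hL1 (i+1)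
    have h3 := hL2 i
    unfold gp
    linarith
  have hN0 : 0 < N := by omega
  have hNn : N ≤ 0 + 2 ^ (Nat.log 2 N + 1) := by
    have := Nat.lt_pow_succ_log_self (by norm_num : 1 < 2) N
    omega
  have hchain := gp_chain hδ hyp (Nat.log 2 N + 1) x u (D - 2 - (K + C)/2) 0 N hN0 hNn hcons
  rw [hx0, hxN, hgpmu] at hchain
  -- analytic bookkeeping
  have hNR : (N : ℝ) ≤ 8 * K * D + 16 * K * (1 + C) := by
    have h1 : ((n1:ℕ) : ℝ) ≤ D + 4 := by
      have h := Nat.ceil_lt_add_one hD0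
      have heq : ((n1 : ℕ) : ℝ) = (⌈D⌉₊ : ℝ) + 3 := by rw [hn1def]; push_cast; ring
      rw [heq]; linarith
    have h2 : ((n2:ℕ) : ℝ) ≤ K * (6 * D + 4 + C) + 2 := by
      have h := Nat.ceil_lt_add_one (show (0:ℝ) ≤ K * (6*D+4+C) by positivity)
      have heq : ((n2 : ℕ) : ℝ) = (⌈K * (6 * D + 4 + C)⌉₊ : ℝ) + 1 := by
        rw [hn2def]; push_cast; ring
      rw [heq]; linarith
    have h3 : (N : ℝ) = (n1:ℝ) + (n2:ℝ) + (n1:ℝ) := by rw [hNdef]; push_cast; ring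
    rw [h3]
    exact count_arith hK hC hD0 h1 h2
  have hD1 := analytic_endgame hK hC hδ hD0 N (Nat.log 2 N + 1) hN0 rfl hNR hchain
  intro t ht
  exact (hfS t ht).trans (hSD.trans hD1)

def Bone (K C δ : ℝ) : ℝ :=
  K * (K * (2 * Dzero K C δ + 3 + C)) + C + Dzero K C δ + 1

lemma Bone_nonneg {K C δ : ℝ} (hK : 1 ≤ K) (hC : 0 ≤ C) (hδ : 0 ≤ δ) : 0 ≤ Bone K C δ := by
  have h := Dzero_ge_one K C δ
  have hK0 : (0:ℝ) ≤ K := by linarith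
  have h3 : (0:ℝ) ≤ K * (K * (2 * Dzero K C δ + 3 + C)) :=
    mul_nonneg hK0 (mul_nonneg hK0 (by linarith))
  unfold Bone
  linarith

set_option maxHeartbeats 1000000 in
lemma morse {K C δ : ℝ} (hK : 1 ≤ K) (hC : 0 ≤ C) (hδ : 0 ≤ δ)
    (geo : ∀ x y : X, ∃ σ : ℝ → X, σ 0 = x ∧ σ (dist x y) = y ∧
      ∀ s ∈ Set.Icc (0:ℝ) (dist x y), ∀ t ∈ Set.Icc (0:ℝ) (dist x y),
        dist (σ s) (σ t) = |s - t|)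
    (hyp : ∀ x y z w : X, min (gp x z w) (gp y z w) - δ ≤ gp x y w)
    (γ : ℝ → X)
    (hγ : ∀ s t : ℝ, |s - t| / K - C ≤ dist (γ s) (γ t) ∧ dist (γ s) (γ t) ≤ K * |s - t| + C) :
    ∀ a b c : ℝ, a ≤ c → c ≤ b → gp (γ a) (γ b) (γ c) ≤ Bone K C δ := by
  intro a b c hac hcb
  classical
  have hK0 : (0:ℝ) < K := by linarith
  have hab : a ≤ b := hac.trans hcb
  obtain ⟨σ, hσ0, hσL, hσiso⟩ := geo (γ a) (γ b)
  have hM1 := morse_M1 hK hC hδ geo hyp γ hγ a b hab σ hσ0 hσL hσiso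
  set L := dist (γ a) (γ b) with hLdef
  have hL0 : 0 ≤ L := dist_nonneg
  set QG := γ '' Set.Icc a b with hQG
  have hQGne : QG.Nonempty := ⟨γ a, ⟨a, ⟨le_rfl, hab⟩, rfl⟩⟩
  set D0 := Dzero K C δ with hD0def
  have hD00 : 1 ≤ D0 := Dzero_ge_one K C δ
  have hchoice : ∀ j : ℕ, ∃ r, (a ≤ r ∧ r ≤ b) ∧
      dist (σ (min (j:ℝ) L)) (γ r) < D0 + 1 := by
    intro j
    have hmem : min ((j:ℕ):ℝ) L ∈ Set.Icc (0:ℝ) L :=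
      ⟨le_min (Nat.cast_nonneg _) hL0, min_le_right _ _⟩
    have h1 : Metric.infDist (σ (min (j:ℝ) L)) QG < D0 + 1 :=
      lt_of_le_of_lt (hM1 _ hmem) (by linarith)
    obtain ⟨z, hz, hlt⟩ := (Metric.infDist_lt_iff hQGne).1 h1
    obtain ⟨r, hr, rfl⟩ := hz
    exact ⟨r, ⟨hr.1, hr.2⟩, hlt⟩
  choose s hs hsd using hchoice
  set J := ⌈L⌉₊ with hJdef
  have huJ : σ (min ((J:ℕ):ℝ) L) = γ b := by
    rw [min_eq_right (Nat.le_ceil L), hσL]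
  have hu0 : σ (min ((0:ℕ):ℝ) L) = γ a := by
    rw [Nat.cast_zero, min_eq_left hL0, hσ0]
  have hs0 : |s 0 - a| ≤ K * (D0 + 1 + C) := by
    have h1 := qg_param hK hγ (s 0) a
    have h2 : dist (γ (s 0)) (γ a) ≤ D0 + 1 := by
      rw [← hu0, dist_comm]
      exact (hsd 0).le
    have h3 : K * (dist (γ (s 0)) (γ a) + C) ≤ K * (D0 + 1 + C) :=
      mul_le_mul_of_nonneg_left (by linarith) (by linarith)
    linarith
  have hsJ : |s J - b| ≤ K * (D0 + 1 + C) := by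
    have h1 := qg_param hK hγ (s J) b
    have h2 : dist (γ (s J)) (γ b) ≤ D0 + 1 := by
      rw [← huJ, dist_comm]
      exact (hsd J).le
    have h3 : K * (dist (γ (s J)) (γ b) + C) ≤ K * (D0 + 1 + C) :=
      mul_le_mul_of_nonneg_left (by linarith) (by linarith)
    linarith
  have hstep : ∀ j : ℕ, |s (j+1) - s j| ≤ K * (2*D0 + 3 + C) := by
    intro j
    have h1 := qg_param hK hγ (s (j+1)) (s j)
    have hmem1 : min (((j+1:ℕ)):ℝ) L ∈ Set.Icc (0:ℝ) L :=
      ⟨le_min (Nat.cast_nonneg _) hL0, min_le_right _ _⟩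
    have hmem2 : min ((j:ℕ):ℝ) L ∈ Set.Icc (0:ℝ) L :=
      ⟨le_min (Nat.cast_nonneg _) hL0, min_le_right _ _⟩
    have h3 : dist (σ (min (((j+1:ℕ)):ℝ) L)) (σ (min ((j:ℕ):ℝ) L)) ≤ 1 := by
      rw [hσiso _ hmem1 _ hmem2]
      have h4 := min_lip (((j+1:ℕ)):ℝ) ((j:ℕ):ℝ) L
      have h5 : |(((j+1:ℕ)):ℝ) - ((j:ℕ):ℝ)| = 1 := by
        push_cast
        rw [show ((j:ℝ) + 1 - (j:ℝ)) = 1 by ring, abs_one]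
      rw [h5] at h4
      exact h4
    have h2 : dist (γ (s (j+1))) (γ (s j)) ≤ 2*D0 + 3 := by
      have t1 := dist_triangle (γ (s (j+1))) (σ (min (((j+1:ℕ)):ℝ) L)) (γ (s j))
      have t2 := dist_triangle (σ (min (((j+1:ℕ)):ℝ) L)) (σ (min ((j:ℕ):ℝ) L)) (γ (s j))
      have h4 : dist (γ (s (j+1))) (σ (min (((j+1:ℕ)):ℝ) L)) ≤ D0 + 1 := by
        rw [dist_comm]; exact (hsd (j+1)).le
      have h5 : dist (σ (min ((j:ℕ):ℝ) L)) (γ (s j)) ≤ D0 + 1 := (hsd j).le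
      linarith
    have h6 : K * (dist (γ (s (j+1))) (γ (s j)) + C) ≤ K * (2*D0 + 3 + C) :=
      mul_le_mul_of_nonneg_left (by linarith) (by linarith)
    linarith
  have hgap : ∃ j : ℕ, |s j - c| ≤ K * (2*D0 + 3 + C) := by
    by_cases hall : ∀ j : ℕ, j ≤ J → s j < c
    · refine ⟨J, ?_⟩
      have h1 := hall J le_rfl
      have h2 : s J ≤ b := (hs J).2
      have h3 : c - s J ≤ |s J - b| := by
        rcases abs_cases (s J - b) with ⟨h, _⟩ | ⟨h, _⟩ <;> linarith
      have h4 : |s J - c| = c - s J := by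
        rw [abs_of_nonpos (by linarith)]; ring
      have h5 : K * (D0+1+C) ≤ K * (2*D0+3+C) :=
        mul_le_mul_of_nonneg_left (by linarith) (by linarith)
      linarith [hsJ]
    · push_neg at hall
      obtain ⟨j0, _, hj0⟩ := hall
      have hex : ∃ j, c ≤ s j := ⟨j0, hj0⟩
      have hj1 : c ≤ s (Nat.find hex) := Nat.find_spec hex
      rcases Nat.eq_zero_or_pos (Nat.find hex) with h0 | hpos
      · refine ⟨0, ?_⟩
        rw [h0] at hj1
        have h3 : |s 0 - c| = s 0 - c := abs_of_nonneg (by linarith)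
        have h4 : s 0 - a ≤ |s 0 - a| := le_abs_self _
        have h5 : K * (D0+1+C) ≤ K * (2*D0+3+C) :=
          mul_le_mul_of_nonneg_left (by linarith) (by linarith)
        linarith [hs0]
      · obtain ⟨k, hk⟩ : ∃ k, Nat.find hex = k + 1 := ⟨Nat.find hex - 1, by omega⟩
        have hklt : s k < c := by
          by_contra hcon
          push_neg at hcon
          exact (Nat.find_min hex (by omega)) hcon
        refine ⟨Nat.find hex, ?_⟩
        have h3 : |s (Nat.find hex) - c| = s (Nat.find hex) - c := abs_of_nonneg (by linarith)
        have h5 := hstep k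
        rw [← hk] at h5
        have h4 : s (Nat.find hex) - s k ≤ |s (Nat.find hex) - s k| := le_abs_self _
        linarith
  obtain ⟨j, hj⟩ := hgap
  have hmem : min ((j:ℕ):ℝ) L ∈ Set.Icc (0:ℝ) L :=
    ⟨le_min (Nat.cast_nonneg _) hL0, min_le_right _ _⟩
  have hq0 : gp (γ a) (γ b) (σ (min ((j:ℕ):ℝ) L)) = 0 := by
    apply gp_between
    have e1 : dist (γ a) (σ (min ((j:ℕ):ℝ) L)) = min ((j:ℕ):ℝ) L := by
      rw [← hσ0, hσiso 0 ⟨le_rfl, hL0⟩ _ hmem, zero_sub, abs_neg, abs_of_nonneg hmem.1]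
    have e2 : dist (σ (min ((j:ℕ):ℝ) L)) (γ b) = L - min ((j:ℕ):ℝ) L := by
      rw [← hσL, hσiso _ hmem L ⟨hL0, le_rfl⟩, abs_of_nonpos (by linarith [hmem.2])]
      ring
    rw [e1, e2]
    ring
  have hfin : dist (γ c) (σ (min ((j:ℕ):ℝ) L)) ≤ K*(K*(2*D0+3+C)) + C + (D0+1) := by
    have h1 := (hγ c (s j)).2
    have h2 : |c - s j| ≤ K*(2*D0+3+C) := by rw [abs_sub_comm]; exact hj
    have h3 := dist_triangle (γ c) (γ (s j)) (σ (min ((j:ℕ):ℝ) L))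
    have h4 : dist (γ (s j)) (σ (min ((j:ℕ):ℝ) L)) ≤ D0 + 1 := by
      rw [dist_comm]; exact (hsd j).le
    have h5 : K * |c - s j| ≤ K * (K*(2*D0+3+C)) :=
      mul_le_mul_of_nonneg_left h2 (by linarith)
    linarith
  have h6 := gp_base_move (γ a) (γ b) (γ c) (σ (min ((j:ℕ):ℝ) L))
  rw [hq0] at h6
  have hBone : Bone K C δ = K*(K*(2*D0+3+C)) + C + D0 + 1 := by rw [Bone, hD0def]
  rw [hBone]
  linarith

end MorseAux

set_option maxHeartbeats 1000000 in
/-- stability of bi-infinite quasi-geodesics with the same endpoints at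
infinity in a δ-hyperbolic geodesic metric space. -/
theorem stmt_1 :
    ∀ K C δ : ℝ, 1 ≤ K → 0 ≤ C → 0 ≤ δ →
    ∃ B : ℝ, 0 ≤ B ∧
      ∀ (X : Type) [inst : MetricSpace X],
        -- X is geodesic
        (∀ x y : X, ∃ σ : ℝ → X, σ 0 = x ∧ σ (dist x y) = y ∧
          ∀ s ∈ Set.Icc (0:ℝ) (dist x y), ∀ t ∈ Set.Icc (0:ℝ) (dist x y),
            dist (σ s) (σ t) = |s - t|) →
        -- X is δ-hyperbolic (four-point Gromov product condition)
        (∀ x y z w : X,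
          min ((dist x w + dist z w - dist x z) / 2)
              ((dist y w + dist z w - dist y z) / 2) - δ
            ≤ (dist x w + dist y w - dist x y) / 2) →
        ∀ γ γ' : ℝ → X,
          -- γ is a (K,C)-quasi-geodesic
          (∀ s t : ℝ,
            |s - t| / K - C ≤ dist (γ s) (γ t) ∧ dist (γ s) (γ t) ≤ K * |s - t| + C) →
          -- γ' is a (K,C)-quasi-geodesic
          (∀ s t : ℝ,
            |s - t| / K - C ≤ dist (γ' s) (γ' t) ∧ dist (γ' s) (γ' t) ≤ K * |s - t| + C) →
          -- forward asymptotic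
          (∀ M : ℝ, ∃ T : ℝ, ∀ s t : ℝ, T ≤ s → T ≤ t →
            M ≤ (dist (γ s) (γ 0) + dist (γ' t) (γ 0) - dist (γ s) (γ' t)) / 2) →
          -- backward asymptotic
          (∀ M : ℝ, ∃ T : ℝ, ∀ s t : ℝ, T ≤ s → T ≤ t →
            M ≤ (dist (γ (-s)) (γ 0) + dist (γ' (-t)) (γ 0) - dist (γ (-s)) (γ' (-t))) / 2) →
          -- conclusion: every point of γ lies within B of the image of γ'
          ∀ s : ℝ, ∃ t : ℝ, dist (γ s) (γ' t) ≤ B := by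
  intro K C δ hK hC hδ
  have hK0 : (0:ℝ) < K := by linarith
  have hB10 : 0 ≤ Bone K C δ := Bone_nonneg hK hC hδ
  refine ⟨3 * Bone K C δ + 4 * δ + K + C, by linarith, ?_⟩
  intro X _ geo hhyp γ γ' hγ hγ' hfwd hbwd s0
  classical
  have hyp : ∀ x y z w : X, min (gp x z w) (gp y z w) - δ ≤ gp x y w := hhyp
  set B1 := Bone K C δ with hB1def
  set w := γ 0 with hw
  set p := γ s0 with hp
  obtain ⟨T1, hT1⟩ := hfwd (B1 + 2*δ + 1 + dist p w)
  obtain ⟨T2, hT2⟩ := hbwd (B1 + 2*δ + 1 + dist p w)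
  set U := max (max T1 T2) (|s0| + 1) with hUdef
  have hUs0 : |s0| + 1 ≤ U := le_max_right _ _
  have hU1 : T1 ≤ U := (le_max_left _ _).trans (le_max_left _ _)
  have hU2 : T2 ≤ U := (le_max_right _ _).trans (le_max_left _ _)
  have habs := abs_nonneg s0
  have hU0 : 1 ≤ U := by linarith
  have hs0U : -U ≤ s0 ∧ s0 ≤ U := by
    constructor
    · linarith [neg_abs_le s0]
    · linarith [le_abs_self s0]
  have hmorse := morse hK hC hδ geo hyp γ hγ
  have hmorse' := morse hK hC hδ geo hyp γ' hγ'
  -- large Gromov products at infinity, based at p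
  have hF1 : B1 + 2*δ + 1 + dist p w ≤ gp (γ U) (γ' U) w := hT1 U U hU1 hU1
  have hF1' : B1 + 2*δ + 1 + dist p w ≤ gp (γ (-U)) (γ' (-U)) w := hT2 U U hU2 hU2
  have hBC1 : B1 + 2*δ + 1 ≤ gp (γ U) (γ' U) p := by
    have h1 := gp_base_move (γ U) (γ' U) w p
    have h2 : dist w p = dist p w := dist_comm w p
    linarith
  have hBC2 : B1 + 2*δ + 1 ≤ gp (γ (-U)) (γ' (-U)) p := by
    have h1 := gp_base_move (γ (-U)) (γ' (-U)) w p
    have h2 : dist w p = dist p w := dist_comm w p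
    linarith
  have hF2 : gp (γ (-U)) (γ U) p ≤ B1 := hmorse (-U) U s0 hs0U.1 hs0U.2
  -- the two quasi-geodesics have small product between opposite ends
  have hF4 : gp (γ' (-U)) (γ' U) p ≤ B1 + 2*δ := by
    have h1 := hyp (γ (-U)) (γ U) (γ' (-U)) p
    have h2 := hyp (γ' (-U)) (γ U) (γ' U) p
    have hcomm := gp_comm (γ U) (γ' (-U)) p
    rcases min_cases (gp (γ (-U)) (γ' (-U)) p) (gp (γ U) (γ' (-U)) p) with ⟨he, _⟩ | ⟨he, _⟩
    · rw [he] at h1; linarith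
    · rw [he] at h1
      rcases min_cases (gp (γ' (-U)) (γ' U) p) (gp (γ U) (γ' U) p) with ⟨he2, _⟩ | ⟨he2, _⟩
      · rw [he2] at h2; linarith
      · rw [he2] at h2; linarith
  -- the discrete walk along γ'
  set tt : ℕ → ℝ := fun nn : ℕ => min (-U + (nn:ℝ)) U with httdef
  have htt0 : tt 0 = -U := by
    simp only [httdef, Nat.cast_zero, add_zero]
    exact min_eq_left (by linarith)
  have httmem : ∀ nn : ℕ, -U ≤ tt nn ∧ tt nn ≤ U := by
    intro nn
    constructor
    · exact le_min (by linarith [(Nat.cast_nonneg nn : (0:ℝ) ≤ (nn:ℝ))]) (by linarith)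
    · exact min_le_right _ _
  set nstar := ⌈2*U⌉₊ with hnstardef
  have httend : tt nstar = U := by
    simp only [httdef]
    apply min_eq_right
    have h1 := Nat.le_ceil (2*U)
    rw [hnstardef]
    linarith
  have httstep : ∀ nn : ℕ, |tt (nn+1) - tt nn| ≤ 1 := by
    intro nn
    have h1 := min_lip (-U + ((nn:ℝ)+1)) (-U + (nn:ℝ)) U
    have h3 : |(-U + ((nn:ℝ)+1)) - (-U + (nn:ℝ))| = 1 := by
      rw [show (-U + ((nn:ℝ)+1)) - (-U + (nn:ℝ)) = 1 by ring]
      exact abs_one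
    simp only [httdef]
    push_cast
    linarith
  have hA0 : gp (γ' (-U)) p (γ' (tt 0)) = 0 := by
    rw [htt0]
    exact gp_self_left _ _
  have hmin : ∀ nn : ℕ,
      min (gp (γ' (-U)) p (γ' (tt nn))) (gp (γ' U) p (γ' (tt nn))) ≤ B1 + δ := by
    intro nn
    have h1 := hyp (γ' (-U)) (γ' U) p (γ' (tt nn))
    have h2 := hmorse' (-U) U (tt nn) (httmem nn).1 (httmem nn).2
    linarith
  have hstepA : ∀ nn : ℕ,
      gp (γ' (-U)) p (γ' (tt (nn+1))) ≤ gp (γ' (-U)) p (γ' (tt nn)) + (K + C) := by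
    intro nn
    have h1 := gp_base_move (γ' (-U)) p (γ' (tt (nn+1))) (γ' (tt nn))
    have h2 : dist (γ' (tt (nn+1))) (γ' (tt nn)) ≤ K + C := by
      have h3 := (hγ' (tt (nn+1)) (tt nn)).2
      have h4 := httstep nn
      have h5 : K * |tt (nn+1) - tt nn| ≤ K * 1 :=
        mul_le_mul_of_nonneg_left h4 (by linarith)
      linarith
    linarith
  have hdistb : ∀ nn : ℕ, dist p (γ' (tt nn)) ≤
      gp (γ' (-U)) p (γ' (tt nn)) + gp (γ' U) p (γ' (tt nn)) + (B1 + 2*δ) := by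
    intro nn
    have h1 := dist_le_gp (γ' (-U)) (γ' U) p (γ' (tt nn))
    linarith [hF4]
  by_cases hall : ∀ nn : ℕ, nn ≤ nstar → gp (γ' (-U)) p (γ' (tt nn)) ≤ B1 + δ
  · refine ⟨tt nstar, ?_⟩
    have h1 := hall nstar le_rfl
    have h2 : gp (γ' U) p (γ' (tt nstar)) = 0 := by
      rw [httend]
      exact gp_self_left _ _
    have h3 := hdistb nstar
    rw [h2] at h3
    linarith
  · push_neg at hall
    obtain ⟨n0, _, hn0⟩ := hall
    have hex : ∃ nn : ℕ, B1 + δ < gp (γ' (-U)) p (γ' (tt nn)) := ⟨n0, hn0⟩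
    have hn1 : B1 + δ < gp (γ' (-U)) p (γ' (tt (Nat.find hex))) := Nat.find_spec hex
    have hn1pos : Nat.find hex ≠ 0 := by
      intro h0
      rw [h0, hA0] at hn1
      linarith
    obtain ⟨k, hk⟩ : ∃ k, Nat.find hex = k + 1 := ⟨Nat.find hex - 1, by omega⟩
    have hkA : gp (γ' (-U)) p (γ' (tt k)) ≤ B1 + δ := by
      by_contra hcon
      push_neg at hcon
      exact (Nat.find_min hex (by omega)) hcon
    have hA1 : gp (γ' (-U)) p (γ' (tt (Nat.find hex))) ≤ B1 + δ + (K + C) := by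
      rw [hk]
      linarith [hstepA k]
    have hB1' : gp (γ' U) p (γ' (tt (Nat.find hex))) ≤ B1 + δ := by
      have h1 := hmin (Nat.find hex)
      rcases min_cases (gp (γ' (-U)) p (γ' (tt (Nat.find hex))))
        (gp (γ' U) p (γ' (tt (Nat.find hex)))) with ⟨he, _⟩ | ⟨he, _⟩
      · rw [he] at h1; linarith
      · rw [he] at h1; linarith
    refine ⟨tt (Nat.find hex), ?_⟩
    have h3 := hdistb (Nat.find hex)
    linarith
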